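/- Let n ≥ 2 and d ≥ 2 be integers. There exist homogeneous forms f1, ..., f_{n+1} of degree d in C[x_1,...,x_n] such that the kernel of the C-algebra homomorphism C[y_1,...,y_{n+1}] → C[x_1,...,x_n] sending y_i to f_i is a principal prime ideal generated by a single irreducible polynomial of degree d^{n−1} (where C[y_1,...,y_{n+1}] is graded with each y_i of degree 1); in particular, among the degree-d forms f1, ..., f_{n+1} there is exactly one polynomial relation of degree d^{n−1} and no nonzero relation of smaller degree. -/

import Mathlib

set_option linter.unusedSectionVars false

open MvPolynomial

noncomputable section Stmt3Aux

namespace Stmt3Aux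

abbrev B (m : ℕ) := MvPolynomial (Fin (m + 2)) ℂ

variable (m d : ℕ) [NeZero d] (ζ : ℂ)

def μ (i : Fin (m + 1)) : Fin (m + 2) →₀ ℕ :=
  Finsupp.single i.castSucc 1 + Finsupp.single i.succ (d - 1)

def gP : B m := ∑ i : Fin (m + 1), monomial (μ m d i) 1

def sig (v : Fin (m + 2) → ZMod d) : B m →ₐ[ℂ] B m :=
  aeval fun i => ζ ^ (v i).val • X i

def gw (w : Fin (m + 1) → ZMod d) : B m := sig m d ζ (Fin.snoc w 0) (gP m d)

def beta : B m →ₐ[ℂ] B m := aeval fun i => X i ^ d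

def DD : ℕ := d ^ (m + 1)

def W : Polynomial (B m) :=
  ∏ w : Fin (m + 1) → ZMod d, (Polynomial.X - Polynomial.C (gw m d ζ w))

def Qc (j : ℕ) : B m := Function.invFun (beta m d) ((W m d ζ).coeff j)

def Pt : Polynomial (B m) :=
  ∑ j ∈ Finset.range (DD m d + 1), Polynomial.C (Qc m d ζ j) * Polynomial.X ^ j

def PP : MvPolynomial (Fin (m + 3)) ℂ := (finSuccEquiv ℂ (m + 2)).symm (Pt m d ζ)

def ff : Fin (m + 3) → B m := Fin.cases (gP m d) fun i => X i ^ d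

variable {m d}

lemma degree_eq_sum_univ {σ : Type*} [Fintype σ] (f : σ →₀ ℕ) :
    f.degree = ∑ k, f k := by
  rw [Finsupp.degree]
  exact Finset.sum_subset (Finset.subset_univ _)
    (fun x _ hx => by simpa using Finsupp.notMem_support_iff.1 hx)

lemma castSucc_ne_succ (i : Fin (m + 1)) : i.castSucc ≠ i.succ := by
  simp [Fin.ext_iff]

lemma sum_univ_single {σ : Type*} [Fintype σ] [DecidableEq σ] (a : σ) (c : ℕ) :
    ∑ k, Finsupp.single a c k = c := by
  simp [Finsupp.single_apply]

set_option linter.unusedSectionVars false in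
lemma μ_degree (hd : 1 ≤ d) (i : Fin (m + 1)) : (μ m d i).degree = d := by
  rw [degree_eq_sum_univ, μ]
  simp only [Finsupp.add_apply]
  rw [Finset.sum_add_distrib, sum_univ_single, sum_univ_single]
  omega

lemma μ_apply (a : Fin (m + 1)) (k : Fin (m + 2)) :
    μ m d a k = (if (a : ℕ) = (k : ℕ) then 1 else 0)
      + (if (a : ℕ) + 1 = (k : ℕ) then d - 1 else 0) := by
  rw [μ]
  simp only [Finsupp.add_apply, Finsupp.single_apply, Fin.ext_iff, Fin.coe_castSucc, Fin.val_succ]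

lemma μ_inj (hd : 2 ≤ d) : Function.Injective (μ m d) := by
  intro i j hij
  by_contra hne
  have hv : (i : ℕ) ≠ (j : ℕ) := fun h => hne (Fin.ext h)
  have h1 := DFunLike.congr_fun hij i.succ
  have h2 := DFunLike.congr_fun hij j.succ
  rw [μ_apply, μ_apply] at h1
  rw [μ_apply, μ_apply] at h2
  simp only [Fin.val_succ] at h1 h2
  split_ifs at h1 h2 <;> omega

def Sv (v : Fin (m + 2) → ZMod d) (u : Fin (m + 2) →₀ ℕ) : ℕ :=
  ∑ k, (v k).val * u k

variable {ζ}

lemma val_cast (a : ZMod d) : ((a.val : ℕ) : ZMod d) = a := by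
  rw [ZMod.natCast_val, ZMod.cast_id]

lemma zpow_eq_iff (hζ : IsPrimitiveRoot ζ d) {a b : ℕ} :
    ζ ^ a = ζ ^ b ↔ (a : ZMod d) = (b : ZMod d) := by
  have hd0 : d ≠ 0 := NeZero.ne d
  have key : ∀ a b : ℕ, a ≤ b → ζ ^ a = ζ ^ b → d ∣ b - a := by
    intro a b hab h
    have hz : ζ ^ a ≠ 0 := pow_ne_zero _ (hζ.ne_zero hd0)
    have h2 : ζ ^ a * ζ ^ (b - a) = ζ ^ a * 1 := by
      rw [mul_one, ← pow_add, h]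
      congr 1
      omega
    exact (hζ.pow_eq_one_iff_dvd _).1 (mul_left_cancel₀ hz h2)
  rw [ZMod.natCast_eq_natCast_iff]
  constructor
  · intro h
    rcases le_total a b with hab | hab
    · exact (Nat.modEq_iff_dvd' hab).2 (key a b hab h)
    · exact ((Nat.modEq_iff_dvd' hab).2 (key b a hab h.symm)).symm
  · intro h
    rcases le_total a b with hab | hab
    · obtain ⟨k, hk⟩ := (Nat.modEq_iff_dvd' hab).1 h
      have hb : b = a + d * k := by omega
      rw [hb, pow_add, pow_mul, hζ.pow_eq_one, one_pow, mul_one]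
    · obtain ⟨k, hk⟩ := (Nat.modEq_iff_dvd' hab).1 h.symm
      have ha : a = b + d * k := by omega
      rw [ha, pow_add, pow_mul, hζ.pow_eq_one, one_pow, mul_one]

lemma sig_monomial (v : Fin (m + 2) → ZMod d) (u : Fin (m + 2) →₀ ℕ) (c : ℂ) :
    sig m d ζ v (monomial u c) = monomial u (c * ζ ^ Sv v u) := by
  rw [sig, aeval_monomial, Finsupp.prod_fintype _ _ (fun i => pow_zero _)]
  simp only [smul_pow, smul_eq_C_mul, mul_pow, ← map_pow, ← pow_mul]
  rw [Finset.prod_mul_distrib, ← map_prod, Finset.prod_pow_eq_pow_sum]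
  rw [monomial_eq, Finsupp.prod_fintype _ _ (fun i => pow_zero _)]
  rw [Sv]
  simp only [algebraMap_eq, map_mul]
  ring

lemma coeff_sig (v : Fin (m + 2) → ZMod d) (b : B m) (u : Fin (m + 2) →₀ ℕ) :
    coeff u (sig m d ζ v b) = ζ ^ Sv v u * coeff u b := by
  conv_lhs => rw [← support_sum_monomial_coeff b]
  rw [map_sum, coeff_sum]
  simp_rw [sig_monomial, coeff_monomial]
  have : ∀ u' ∈ b.support,
      (if u' = u then coeff u' b * ζ ^ Sv v u' else 0)
        = if u' = u then coeff u b * ζ ^ Sv v u else 0 := by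
    intro u' _
    split_ifs with h
    · rw [h]
    · rfl
  rw [Finset.sum_congr rfl this, Finset.sum_ite_eq' b.support u]
  by_cases h : u ∈ b.support
  · simp [h, mul_comm]
  · rw [if_neg h]
    rw [notMem_support_iff.1 h]
    ring

lemma sig_comp (v v' : Fin (m + 2) → ZMod d) (hζ : IsPrimitiveRoot ζ d) (b : B m) :
    sig m d ζ v (sig m d ζ v' b) = sig m d ζ (v + v') b := by
  have : (sig m d ζ v).comp (sig m d ζ v') = sig m d ζ (v + v') := by
    apply algHom_ext
    intro i
    simp only [AlgHom.comp_apply, sig, aeval_X, map_smul, smul_smul]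
    congr 1
    rw [← pow_add, zpow_eq_iff hζ]
    push_cast
    rw [val_cast, val_cast, val_cast, Pi.add_apply]
    ring
  calc sig m d ζ v (sig m d ζ v' b) = ((sig m d ζ v).comp (sig m d ζ v')) b := rfl
    _ = sig m d ζ (v + v') b := by rw [this]

lemma sum_mul_single {N : ℕ} (v : Fin N → ℕ) (a : Fin N) (x : ℕ) :
    ∑ k, v k * Finsupp.single a x k = v a * x := by
  rw [Finset.sum_eq_single a]
  · simp
  · intro k _ hk
    simp [Finsupp.single_apply, Ne.symm hk]
  · simp

lemma Sv_μ (v : Fin (m + 2) → ZMod d) (i : Fin (m + 1)) :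
    Sv v (μ m d i) = (v i.castSucc).val * 1 + (v i.succ).val * (d - 1) := by
  rw [Sv, μ]
  simp only [Finsupp.add_apply, mul_add]
  rw [Finset.sum_add_distrib, sum_mul_single, sum_mul_single]

lemma gw_eq (w : Fin (m + 1) → ZMod d) :
    gw m d ζ w = ∑ i : Fin (m + 1),
      monomial (μ m d i) (ζ ^ Sv (Fin.snoc w 0) (μ m d i)) := by
  rw [gw, gP, map_sum]
  simp_rw [sig_monomial, one_mul]

lemma coeff_gw (hd : 2 ≤ d) (w : Fin (m + 1) → ZMod d) (i : Fin (m + 1)) :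
    coeff (μ m d i) (gw m d ζ w) = ζ ^ Sv (Fin.snoc w 0) (μ m d i) := by
  rw [gw_eq, coeff_sum]
  simp_rw [coeff_monomial]
  rw [Finset.sum_eq_single i]
  · simp
  · intro k _ hk
    rw [if_neg (fun h => hk (μ_inj hd h))]
  · simp

lemma gw_inj (hd : 2 ≤ d) (hζ : IsPrimitiveRoot ζ d) :
    Function.Injective (gw m d ζ) := by
  intro w w' hww
  set v : Fin (m + 2) → ZMod d := Fin.snoc w 0 with hv
  set v' : Fin (m + 2) → ZMod d := Fin.snoc w' 0 with hv'
  have hδ : ∀ i : Fin (m + 1), v i.castSucc - v' i.castSucc = v i.succ - v' i.succ := by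
    intro i
    have h := congrArg (coeff (μ m d i)) hww
    rw [coeff_gw hd, coeff_gw hd, zpow_eq_iff hζ, Sv_μ, Sv_μ] at h
    push_cast at h
    rw [val_cast, val_cast, val_cast, val_cast] at h
    have hdm : ((d - 1 : ℕ) : ZMod d) = -1 := by
      have : ((d - 1 : ℕ) : ZMod d) = (d : ZMod d) - 1 := by
        have h1 : (1 : ℕ) ≤ d := by omega
        push_cast [Nat.cast_sub h1]
        ring
      rw [this, ZMod.natCast_self]
      ring
    rw [hdm] at h
    -- h : v cs * 1 + v succ * -1 = v' cs * 1 + v' succ * -1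
    linear_combination h
  have hall : ∀ k : Fin (m + 2), v k - v' k = v 0 - v' 0 := by
    intro k
    induction k using Fin.induction with
    | zero => rfl
    | succ i ih =>
      rw [← hδ i]
      exact ih
  have hlast : v (Fin.last (m + 1)) - v' (Fin.last (m + 1)) = 0 := by
    rw [hv, hv']
    simp [Fin.snoc_last]
  rw [hall (Fin.last (m + 1))] at hlast
  funext i
  have := hall i.castSucc
  rw [hlast] at this
  have h2 : v i.castSucc = v' i.castSucc := by
    have := sub_eq_zero.1 this
    exact this
  rw [hv, hv'] at h2
  simpa [Fin.snoc_castSucc] using h2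

lemma homog_neg {N n : ℕ} {p : MvPolynomial (Fin N) ℂ} (h : p.IsHomogeneous n) :
    (-p).IsHomogeneous n := by
  rw [← mem_homogeneousSubmodule] at h ⊢
  exact (homogeneousSubmodule _ ℂ n).neg_mem h

lemma homog_sub {N n : ℕ} {p q : MvPolynomial (Fin N) ℂ} (hp : p.IsHomogeneous n)
    (hq : q.IsHomogeneous n) : (p - q).IsHomogeneous n := by
  rw [sub_eq_add_neg]
  exact hp.add (homog_neg hq)

lemma isHomogeneous_iff' {N n : ℕ} {p : MvPolynomial (Fin N) ℂ} :
    p.IsHomogeneous n ↔ ∀ u : Fin N →₀ ℕ, coeff u p ≠ 0 → ∑ k, u k = n := by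
  constructor
  · intro h u hu
    by_contra hne
    exact hu (h.coeff_eq_zero (by rwa [degree_eq_sum_univ]))
  · intro h u hu
    have hdeg : u.degree = n := by rw [degree_eq_sum_univ]; exact h u hu
    rwa [Finsupp.degree_eq_weight_one] at hdeg

lemma gP_homog (hd : 1 ≤ d) : (gP m d).IsHomogeneous d := by
  rw [gP]
  exact IsHomogeneous.sum _ _ _ fun i _ => isHomogeneous_monomial _ (μ_degree hd i)

lemma gw_homog (hd : 1 ≤ d) (w : Fin (m + 1) → ZMod d) :
    (gw m d ζ w).IsHomogeneous d := by
  rw [gw_eq]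
  exact IsHomogeneous.sum _ _ _ fun i _ => isHomogeneous_monomial _ (μ_degree hd i)

lemma coeff_prod_X_sub_C_homog {ι : Type*} [DecidableEq ι] (e : ℕ) (s : Finset ι)
    (a : ι → B m) (ha : ∀ i, (a i).IsHomogeneous e) (j : ℕ) :
    ((∏ i ∈ s, (Polynomial.X - Polynomial.C (a i))).coeff j).IsHomogeneous
      (e * (s.card - j)) := by
  induction s using Finset.induction generalizing j with
  | empty =>
    simp only [Finset.prod_empty, Polynomial.coeff_one, Finset.card_empty]
    split_ifs with h
    · subst h
      simpa using isHomogeneous_one (Fin (m + 2)) ℂ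
    · exact isHomogeneous_zero _ _ _
  | @insert i₀ s hi₀ ih =>
    rw [Finset.prod_insert hi₀, Finset.card_insert_of_notMem hi₀]
    set p := ∏ i ∈ s, (Polynomial.X - Polynomial.C (a i)) with hp
    have hdegp : p.natDegree = s.card := by
      rw [hp, Polynomial.natDegree_prod _ _ (fun i _ => Polynomial.X_sub_C_ne_zero (a i))]
      simp [Polynomial.natDegree_X_sub_C]
    have expand : ∀ j : ℕ, ((Polynomial.X - Polynomial.C (a i₀)) * p).coeff j
        = (Polynomial.X * p).coeff j - a i₀ * p.coeff j := by
      intro j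
      rw [sub_mul, Polynomial.coeff_sub, Polynomial.coeff_C_mul]
    cases j with
    | zero =>
      rw [expand 0]
      have h0 : (Polynomial.X * p).coeff 0 = 0 := by
        rw [Polynomial.mul_coeff_zero, Polynomial.coeff_X_zero, zero_mul]
      rw [h0, zero_sub]
      have harr : e * (s.card + 1 - 0) = e + e * (s.card - 0) := by
        simp [Nat.mul_succ]
        ring
      rw [harr]
      exact homog_neg ((ha i₀).mul (ih 0))
    | succ k =>
      rw [expand (k + 1), Polynomial.coeff_X_mul]
      have hE : s.card + 1 - (k + 1) = s.card - k := by omega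
      rw [hE]
      by_cases hk : k < s.card
      · have harr : e * (s.card - k) = e + e * (s.card - (k + 1)) := by
          have h1 : s.card - k = s.card - (k + 1) + 1 := by omega
          rw [h1, Nat.mul_succ]
          ring
        refine homog_sub (ih k) ?_
        rw [harr]
        exact (ha i₀).mul (ih (k + 1))
      · have hz : p.coeff (k + 1) = 0 := by
          apply Polynomial.coeff_eq_zero_of_natDegree_lt
          omega
        rw [hz, mul_zero, sub_zero]
        exact ih k

lemma zeta_pow_mul_d (hζ : IsPrimitiveRoot ζ d) (a : ℕ) : ζ ^ (a * d) = 1 := by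
  rw [mul_comm, pow_mul, hζ.pow_eq_one, one_pow]

lemma beta_monomial (u : Fin (m + 2) →₀ ℕ) (c : ℂ) :
    beta m d (monomial u c) = monomial (d • u) c := by
  rw [beta, aeval_monomial, Finsupp.prod_fintype _ _ (fun i => pow_zero _)]
  rw [monomial_eq, Finsupp.prod_fintype _ _ (fun i => pow_zero _)]
  simp only [← pow_mul, algebraMap_eq, Finsupp.smul_apply, smul_eq_mul]

lemma coeff_beta (hd : d ≠ 0) (b : B m) (u : Fin (m + 2) →₀ ℕ) :
    coeff (d • u) (beta m d b) = coeff u b := by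
  have hinj : ∀ u u' : Fin (m + 2) →₀ ℕ, d • u' = d • u → u' = u := by
    intro u u' h
    ext i
    have := DFunLike.congr_fun h i
    rw [Finsupp.smul_apply, Finsupp.smul_apply, smul_eq_mul, smul_eq_mul] at this
    exact Nat.eq_of_mul_eq_mul_left (Nat.pos_of_ne_zero hd) this
  conv_lhs => rw [← support_sum_monomial_coeff b]
  rw [map_sum, coeff_sum]
  simp_rw [beta_monomial, coeff_monomial]
  have step : ∀ u' ∈ b.support,
      (if d • u' = d • u then coeff u' b else 0) = if u' = u then coeff u b else 0 := by
    intro u' _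
    by_cases h : u' = u
    · subst h; simp
    · rw [if_neg h, if_neg (fun hh => h (hinj _ _ hh))]
  rw [Finset.sum_congr rfl step, Finset.sum_ite_eq' b.support u]
  by_cases h : u ∈ b.support
  · rw [if_pos h]
  · rw [if_neg h, notMem_support_iff.1 h]

lemma beta_inj (hd : d ≠ 0) : Function.Injective ⇑(beta m d) := by
  intro a b h
  apply MvPolynomial.ext
  intro u
  rw [← coeff_beta hd a u, ← coeff_beta hd b u, h]

lemma beta_range (hd : 2 ≤ d) (hζ : IsPrimitiveRoot ζ d) (b : B m)
    (hb : ∀ v, sig m d ζ v b = b) : ∃ q, beta m d q = b := by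
  have hdvd : ∀ u ∈ b.support, ∀ i, d ∣ u i := by
    intro u hu i
    set v : Fin (m + 2) → ZMod d := Function.update (0 : Fin (m + 2) → ZMod d) i 1 with hv
    have h1 := congrArg (coeff u) (hb v)
    rw [coeff_sig] at h1
    have hco : coeff u b ≠ 0 := mem_support_iff.1 hu
    have h2 : ζ ^ Sv v u = 1 :=
      mul_right_cancel₀ hco (h1.trans (one_mul (coeff u b)).symm)
    have hS : Sv v u = u i := by
      rw [Sv, Finset.sum_eq_single i]
      · rw [hv]
        simp [ZMod.val_one_eq_one_mod, Nat.mod_eq_of_lt (by omega : 1 < d)]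
      · intro k _ hk
        rw [hv]
        simp [Function.update_apply, hk]
      · simp
    have h3 : ((u i : ℕ) : ZMod d) = ((0 : ℕ) : ZMod d) := by
      apply (zpow_eq_iff hζ).1
      rw [pow_zero, ← hS, h2]
    rw [Nat.cast_zero] at h3
    exact (ZMod.natCast_eq_zero_iff _ _).1 h3
  refine ⟨∑ u ∈ b.support, monomial (u.mapRange (· / d) (Nat.zero_div d)) (coeff u b), ?_⟩
  rw [map_sum]
  simp_rw [beta_monomial]
  have step : ∀ u ∈ b.support,
      monomial (d • u.mapRange (· / d) (Nat.zero_div d)) (coeff u b) = monomial u (coeff u b) := by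
    intro u hu
    have harg : d • u.mapRange (· / d) (Nat.zero_div d) = u := by
      ext i
      rw [Finsupp.smul_apply, Finsupp.mapRange_apply, smul_eq_mul]
      exact Nat.mul_div_cancel' (hdvd u hu i)
    rw [harg]
  rw [Finset.sum_congr rfl step, support_sum_monomial_coeff]

lemma beta_homog_rev (hd : d ≠ 0) {b : B m} {t : ℕ}
    (h : (beta m d b).IsHomogeneous (d * t)) : b.IsHomogeneous t := by
  rw [isHomogeneous_iff'] at h ⊢
  intro u hu
  have h2 := h (d • u) (by rw [coeff_beta hd]; exact hu)
  simp only [Finsupp.smul_apply, smul_eq_mul] at h2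
  rw [← Finset.mul_sum] at h2
  exact Nat.eq_of_mul_eq_mul_left (Nat.pos_of_ne_zero hd) h2

lemma sig_beta (hζ : IsPrimitiveRoot ζ d) (v : Fin (m + 2) → ZMod d) (q : B m) :
    sig m d ζ v (beta m d q) = beta m d q := by
  have hcomp : (sig m d ζ v).comp (beta m d) = beta m d := by
    apply algHom_ext
    intro i
    simp only [AlgHom.comp_apply, beta, aeval_X, map_pow, sig, smul_pow]
    rw [← pow_mul, zeta_pow_mul_d hζ, one_smul]
  calc sig m d ζ v (beta m d q) = ((sig m d ζ v).comp (beta m d)) q := rfl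
    _ = beta m d q := by rw [hcomp]

lemma sig_const_gP (hd : 1 ≤ d) (hζ : IsPrimitiveRoot ζ d) (c : ZMod d) :
    sig m d ζ (fun _ => c) (gP m d) = gP m d := by
  rw [gP, map_sum]
  simp_rw [sig_monomial, one_mul]
  apply Finset.sum_congr rfl
  intro i _
  have hS : Sv (fun _ => c) (μ m d i) = c.val * d := by
    rw [Sv, ← Finset.mul_sum, ← degree_eq_sum_univ, μ_degree hd]
  rw [hS, zeta_pow_mul_d hζ]

lemma sig_gw (hd : 1 ≤ d) (hζ : IsPrimitiveRoot ζ d) (v : Fin (m + 2) → ZMod d)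
    (w : Fin (m + 1) → ZMod d) :
    sig m d ζ v (gw m d ζ w)
      = gw m d ζ (fun i => w i + (v i.castSucc - v (Fin.last (m + 1)))) := by
  rw [gw, sig_comp v _ hζ]
  have hdecomp : v + Fin.snoc w (0 : ZMod d)
      = Fin.snoc (fun i => w i + (v i.castSucc - v (Fin.last (m + 1)))) (0 : ZMod d)
        + (fun _ => v (Fin.last (m + 1))) := by
    funext k
    rw [Pi.add_apply, Pi.add_apply]
    induction k using Fin.lastCases with
    | last => simp [Fin.snoc_last]
    | cast i => simp [Fin.snoc_castSucc]; ring
  rw [hdecomp, ← sig_comp _ _ hζ (gP m d), sig_const_gP hd hζ, gw]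

lemma card_fun_eq : Fintype.card (Fin (m + 1) → ZMod d) = DD m d := by
  rw [Fintype.card_fun, ZMod.card, Fintype.card_fin, DD]

lemma monic_W : (W m d ζ).Monic :=
  Polynomial.monic_prod_of_monic _ _ (fun w _ => Polynomial.monic_X_sub_C _)

lemma natDegree_W : (W m d ζ).natDegree = DD m d := by
  rw [W, Polynomial.natDegree_prod_of_monic _ _ (fun w _ => Polynomial.monic_X_sub_C _)]
  simp only [Polynomial.natDegree_X_sub_C, Finset.sum_const, smul_eq_mul, mul_one,
    Finset.card_univ, card_fun_eq]

lemma map_sig_W (hd : 1 ≤ d) (hζ : IsPrimitiveRoot ζ d) (v : Fin (m + 2) → ZMod d) :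
    (W m d ζ).map (sig m d ζ v).toRingHom = W m d ζ := by
  rw [W, Polynomial.map_prod]
  simp only [Polynomial.map_sub, Polynomial.map_X, Polynomial.map_C]
  set τ : Fin (m + 1) → ZMod d := fun i => v i.castSucc - v (Fin.last (m + 1)) with hτ
  apply Fintype.prod_equiv (Equiv.addRight τ)
  intro w
  rw [AlgHom.toRingHom_eq_coe, RingHom.coe_coe, sig_gw hd hζ]
  rfl

lemma sig_coeff_W (hd : 1 ≤ d) (hζ : IsPrimitiveRoot ζ d) (v : Fin (m + 2) → ZMod d) (j : ℕ) :
    sig m d ζ v ((W m d ζ).coeff j) = (W m d ζ).coeff j := by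
  conv_rhs => rw [← map_sig_W hd hζ v]
  rw [Polynomial.coeff_map]
  rfl

lemma beta_Qc (hd : 2 ≤ d) (hζ : IsPrimitiveRoot ζ d) (j : ℕ) :
    beta m d (Qc m d ζ j) = (W m d ζ).coeff j := by
  rw [Qc]
  exact Function.invFun_eq
    (beta_range hd hζ _ (fun v => sig_coeff_W (by omega) hζ v j))

lemma Qc_homog (hd : 2 ≤ d) (hζ : IsPrimitiveRoot ζ d) (j : ℕ) :
    (Qc m d ζ j).IsHomogeneous (DD m d - j) := by
  apply beta_homog_rev (by omega : d ≠ 0)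
  rw [beta_Qc hd hζ]
  have h := coeff_prod_X_sub_C_homog (m := m) d Finset.univ (fun w => gw m d ζ w)
    (fun w => gw_homog (by omega) w) j
  rw [Finset.card_univ, card_fun_eq] at h
  exact h

lemma Qc_zero_of_gt (hd : 2 ≤ d) (hζ : IsPrimitiveRoot ζ d) {j : ℕ} (hj : DD m d < j) :
    Qc m d ζ j = 0 := by
  apply beta_inj (by omega : d ≠ 0)
  rw [beta_Qc hd hζ, map_zero]
  apply Polynomial.coeff_eq_zero_of_natDegree_lt
  rw [natDegree_W]
  exact hj

lemma Qc_DD (hd : 2 ≤ d) (hζ : IsPrimitiveRoot ζ d) : Qc m d ζ (DD m d) = 1 := by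
  apply beta_inj (by omega : d ≠ 0)
  rw [beta_Qc hd hζ, map_one]
  have := (monic_W (m := m) (d := d) (ζ := ζ)).coeff_natDegree
  rwa [natDegree_W] at this

lemma coeff_Pt (hd : 2 ≤ d) (hζ : IsPrimitiveRoot ζ d) (k : ℕ) :
    (Pt m d ζ).coeff k = Qc m d ζ k := by
  rw [Pt, Polynomial.finset_sum_coeff]
  simp_rw [Polynomial.coeff_C_mul, Polynomial.coeff_X_pow]
  by_cases hk : k ≤ DD m d
  · rw [Finset.sum_eq_single k]
    · simp
    · intro j _ hj
      rw [if_neg (fun h => hj h.symm), mul_zero]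
    · intro h
      exact absurd (Finset.mem_range.2 (by omega)) h
  · rw [Finset.sum_eq_zero, Qc_zero_of_gt hd hζ (by omega)]
    intro j hj
    rw [Finset.mem_range] at hj
    rw [if_neg (by omega), mul_zero]

lemma map_beta_Pt (hd : 2 ≤ d) (hζ : IsPrimitiveRoot ζ d) :
    (Pt m d ζ).map (beta m d).toRingHom = W m d ζ := by
  apply Polynomial.ext
  intro k
  rw [Polynomial.coeff_map, AlgHom.toRingHom_eq_coe, RingHom.coe_coe, coeff_Pt hd hζ,
    beta_Qc hd hζ]

lemma natDegree_Pt_le (hd : 2 ≤ d) (hζ : IsPrimitiveRoot ζ d) :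
    (Pt m d ζ).natDegree ≤ DD m d := by
  rw [Polynomial.natDegree_le_iff_coeff_eq_zero]
  intro k hk
  rw [coeff_Pt hd hζ, Qc_zero_of_gt hd hζ hk]

lemma monic_Pt (hd : 2 ≤ d) (hζ : IsPrimitiveRoot ζ d) : (Pt m d ζ).Monic := by
  apply Polynomial.monic_of_natDegree_le_of_coeff_eq_one (DD m d) (natDegree_Pt_le hd hζ)
  rw [coeff_Pt hd hζ, Qc_DD hd hζ]

lemma natDegree_Pt (hd : 2 ≤ d) (hζ : IsPrimitiveRoot ζ d) :
    (Pt m d ζ).natDegree = DD m d := by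
  refine le_antisymm (natDegree_Pt_le hd hζ) ?_
  apply Polynomial.le_natDegree_of_ne_zero
  rw [coeff_Pt hd hζ, Qc_DD hd hζ]
  exact one_ne_zero

lemma gw_zero (hd : 1 ≤ d) (hζ : IsPrimitiveRoot ζ d) : gw m d ζ 0 = gP m d := by
  rw [gw]
  have hsnoc : (Fin.snoc (0 : Fin (m + 1) → ZMod d) (0 : ZMod d)) = (fun _ => (0 : ZMod d)) := by
    funext k
    induction k using Fin.lastCases with
    | last => simp [Fin.snoc_last]
    | cast i => simp [Fin.snoc_castSucc]
  rw [hsnoc, sig_const_gP hd hζ]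

lemma eval_W (hd : 2 ≤ d) (hζ : IsPrimitiveRoot ζ d) : (W m d ζ).eval (gP m d) = 0 := by
  rw [W, Polynomial.eval_prod]
  apply Finset.prod_eq_zero (Finset.mem_univ (0 : Fin (m + 1) → ZMod d))
  rw [gw_zero (by omega) hζ]
  simp

lemma aeval_ff_eq (Q : MvPolynomial (Fin (m + 3)) ℂ) :
    aeval (ff m d) Q = ((finSuccEquiv ℂ (m + 2) Q).map (beta m d).toRingHom).eval (gP m d) := by
  have hcomp : (aeval (ff m d) : MvPolynomial (Fin (m + 3)) ℂ →ₐ[ℂ] B m)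
      = (((Polynomial.aeval (gP m d)).restrictScalars ℂ).comp
          ((Polynomial.mapAlgHom (beta m d)).comp (finSuccEquiv ℂ (m + 2)).toAlgHom)) := by
    apply algHom_ext
    intro i
    induction i using Fin.cases with
    | zero =>
      simp [ff, finSuccEquiv_X_zero]
    | succ i =>
      simp [ff, finSuccEquiv_X_succ, beta]
  have happ := congrArg (fun F : MvPolynomial (Fin (m + 3)) ℂ →ₐ[ℂ] B m => F Q) hcomp
  simp only [AlgHom.comp_apply, AlgHom.coe_restrictScalars', AlgEquiv.toAlgHom_eq_coe,
    AlgHom.coe_coe] at happ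
  rw [happ, Polynomial.coe_mapAlgHom, Polynomial.coe_aeval_eq_eval]
  rfl

lemma claimA (hd : 2 ≤ d) (hζ : IsPrimitiveRoot ζ d) (R' : Polynomial (B m))
    (hdeg : R'.natDegree < DD m d)
    (h0 : (R'.map (beta m d).toRingHom).eval (gP m d) = 0) : R' = 0 := by
  set R₂ := R'.map (beta m d).toRingHom with hR2
  have heval : ∀ w : Fin (m + 1) → ZMod d, R₂.eval (gw m d ζ w) = 0 := by
    intro w
    have hmap : R₂.map (sig m d ζ (Fin.snoc w 0)).toRingHom = R₂ := by
      rw [hR2, Polynomial.map_map]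
      congr 1
      have hc : (sig m d ζ (Fin.snoc w 0)).comp (beta m d) = beta m d :=
        AlgHom.ext (fun q => by rw [AlgHom.comp_apply]; exact sig_beta hζ _ q)
      calc (sig m d ζ (Fin.snoc w 0)).toRingHom.comp (beta m d).toRingHom
          = ((sig m d ζ (Fin.snoc w 0)).comp (beta m d)).toRingHom := rfl
        _ = (beta m d).toRingHom := by rw [hc]
    calc R₂.eval (gw m d ζ w)
        = (R₂.map (sig m d ζ (Fin.snoc w 0)).toRingHom).eval
            ((sig m d ζ (Fin.snoc w 0)).toRingHom (gP m d)) := by rw [hmap]; rfl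
      _ = (sig m d ζ (Fin.snoc w 0)).toRingHom (R₂.eval (gP m d)) := by
          rw [Polynomial.eval_map, Polynomial.eval₂_at_apply]
      _ = 0 := by rw [h0, map_zero]
  by_contra hne
  have hne2 : R₂ ≠ 0 := fun h =>
    hne ((Polynomial.map_eq_zero_iff (beta_inj (by omega : d ≠ 0))).1 h)
  apply hne2
  apply Polynomial.eq_zero_of_natDegree_lt_card_of_eval_eq_zero R₂ (gw_inj hd hζ) heval
  rw [card_fun_eq]
  exact lt_of_le_of_lt Polynomial.natDegree_map_le hdeg

lemma sig_zero_apply (b : B m) : sig m d ζ 0 b = b := by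
  rw [sig]
  simp only [Pi.zero_apply, ZMod.val_zero, pow_zero, one_smul]
  exact aeval_X_left_apply b

lemma sig_injective (hζ : IsPrimitiveRoot ζ d) (v : Fin (m + 2) → ZMod d) :
    Function.Injective (sig m d ζ v) := by
  intro a b h
  have h2 := congrArg (sig m d ζ (-v)) h
  rw [sig_comp _ _ hζ, sig_comp _ _ hζ, neg_add_cancel] at h2
  rwa [sig_zero_apply, sig_zero_apply] at h2

lemma DD_ge_two (hd : 2 ≤ d) : 2 ≤ DD m d :=
  le_trans hd (by rw [DD]; exact Nat.le_self_pow (by omega) d)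

set_option synthInstance.maxHeartbeats 1000000 in
lemma irreducible_Pt (hd : 2 ≤ d) (hζ : IsPrimitiveRoot ζ d) : Irreducible (Pt m d ζ) := by
  classical
  rw [(monic_Pt hd hζ).irreducible_iff_irreducible_map_fraction_map (K := FractionRing (B m))]
  set K := FractionRing (B m)
  set toK := algebraMap (B m) K with htoK
  have htoKinj : Function.Injective ⇑toK := IsFractionRing.injective (B m) K
  have hbi : Function.Injective ⇑(toK.comp (beta m d).toRingHom) := by
    rw [RingHom.coe_comp]
    exact htoKinj.comp (beta_inj (by omega : d ≠ 0))
  set ι : K →+* K := IsFractionRing.lift hbi with hι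
  have hιtoK : ∀ x, ι (toK x) = toK (beta m d x) :=
    fun x => IsFractionRing.lift_algebraMap hbi x
  have hPtW : ((Pt m d ζ).map toK).map ι = (W m d ζ).map toK := by
    rw [Polynomial.map_map]
    have hc : ι.comp toK = toK.comp (beta m d).toRingHom := RingHom.ext hιtoK
    rw [hc, ← Polynomial.map_map, map_beta_Pt hd hζ]
  have hgroots : ∀ p : Polynomial K, p ≠ 0 → (p.map ι).eval (toK (gP m d)) = 0 →
      DD m d ≤ p.natDegree := by
    intro p hp0 hproot
    by_contra hlt
    push_neg at hlt
    have hpl0 : p.map ι ≠ 0 := fun h =>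
      hp0 ((Polynomial.map_eq_zero_iff (RingHom.injective ι)).1 h)
    apply hpl0
    apply Polynomial.eq_zero_of_natDegree_lt_card_of_eval_eq_zero (p.map ι)
      (f := fun w : Fin (m + 1) → ZMod d => toK (gw m d ζ w))
      (htoKinj.comp (gw_inj hd hζ))
    · intro w
      have hsinj : Function.Injective ⇑(toK.comp (sig m d ζ (Fin.snoc w 0)).toRingHom) := by
        rw [RingHom.coe_comp]
        exact htoKinj.comp (sig_injective hζ _)
      set σh : K →+* K := IsFractionRing.lift hsinj with hσ
      have hσtoK : ∀ x, σh (toK x) = toK (sig m d ζ (Fin.snoc w 0) x) :=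
        fun x => IsFractionRing.lift_algebraMap hsinj x
      have hσι : σh.comp ι = ι := by
        apply IsLocalization.ringHom_ext (nonZeroDivisors (B m))
        apply RingHom.ext
        intro x
        simp only [RingHom.comp_apply]
        rw [hιtoK x, hσtoK, sig_beta hζ]
      have hmapσ : (p.map ι).map σh = p.map ι := by
        rw [Polynomial.map_map, hσι]
      calc (p.map ι).eval (toK (gw m d ζ w))
          = ((p.map ι).map σh).eval (σh (toK (gP m d))) := by
            rw [hmapσ, hσtoK]
            rfl
        _ = σh ((p.map ι).eval (toK (gP m d))) := by
            rw [Polynomial.eval_map, Polynomial.eval₂_at_apply]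
        _ = 0 := by rw [hproot, map_zero]
    · rw [card_fun_eq]
      exact lt_of_le_of_lt Polynomial.natDegree_map_le hlt
  constructor
  · intro hu
    rw [Polynomial.isUnit_iff_degree_eq_zero] at hu
    have h1 : ((Pt m d ζ).map toK).natDegree = DD m d := by
      rw [(monic_Pt hd hζ).natDegree_map, natDegree_Pt hd hζ]
    rw [Polynomial.degree_eq_natDegree ((monic_Pt hd hζ).map toK).ne_zero, h1] at hu
    have h2 := DD_ge_two (m := m) hd
    exact absurd hu (by exact_mod_cast (by omega : DD m d ≠ 0))
  · intro a b hab
    have hPtm : ((Pt m d ζ).map toK).Monic := (monic_Pt hd hζ).map toK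
    have hab0 : a * b ≠ 0 := hab ▸ hPtm.ne_zero
    have ha0 : a ≠ 0 := fun h => hab0 (by rw [h, zero_mul])
    have hb0 : b ≠ 0 := fun h => hab0 (by rw [h, mul_zero])
    have hdeg : a.natDegree + b.natDegree = DD m d := by
      rw [← Polynomial.natDegree_mul ha0 hb0, ← hab, (monic_Pt hd hζ).natDegree_map,
        natDegree_Pt hd hζ]
    have hevalprod : (a.map ι).eval (toK (gP m d)) * (b.map ι).eval (toK (gP m d)) = 0 := by
      have hmul : (a.map ι) * (b.map ι) = (W m d ζ).map toK := by
        rw [← Polynomial.map_mul, ← hab, hPtW]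
      have h2 := congrArg (Polynomial.eval (toK (gP m d))) hmul
      rw [Polynomial.eval_mul] at h2
      rw [h2, Polynomial.eval_map, Polynomial.eval₂_at_apply, eval_W hd hζ, map_zero]
    rcases mul_eq_zero.1 hevalprod with h | h
    · right
      have hge := hgroots a ha0 h
      rw [Polynomial.isUnit_iff_degree_eq_zero, Polynomial.degree_eq_natDegree hb0]
      have hb' : b.natDegree = 0 := by omega
      rw [hb']
      rfl
    · left
      have hge := hgroots b hb0 h
      rw [Polynomial.isUnit_iff_degree_eq_zero, Polynomial.degree_eq_natDegree ha0]
      have ha' : a.natDegree = 0 := by omega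
      rw [ha']
      rfl

lemma coeff_PP (hd : 2 ≤ d) (hζ : IsPrimitiveRoot ζ d) (u : Fin (m + 3) →₀ ℕ) :
    coeff u (PP m d ζ) = coeff (Finsupp.tail u) (Qc m d ζ (u 0)) := by
  conv_lhs => rw [← Finsupp.cons_tail u]
  rw [← finSuccEquiv_coeff_coeff, PP, AlgEquiv.apply_symm_apply, coeff_Pt hd hζ]

lemma homog_PP (hd : 2 ≤ d) (hζ : IsPrimitiveRoot ζ d) :
    (PP m d ζ).IsHomogeneous (DD m d) := by
  rw [isHomogeneous_iff']
  intro u hu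
  rw [coeff_PP hd hζ] at hu
  have hle : u 0 ≤ DD m d := by
    by_contra hgt
    rw [Qc_zero_of_gt hd hζ (by omega)] at hu
    simp at hu
  have h2 := (isHomogeneous_iff'.1 (Qc_homog hd hζ (u 0))) _ hu
  rw [Fin.sum_univ_succ]
  have htail : ∀ i : Fin (m + 2), u i.succ = Finsupp.tail u i := fun i => rfl
  rw [Finset.sum_congr rfl (fun i _ => htail i), h2]
  omega

lemma aeval_ff_PP (hd : 2 ≤ d) (hζ : IsPrimitiveRoot ζ d) :
    aeval (ff m d) (PP m d ζ) = 0 := by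
  rw [aeval_ff_eq, PP, AlgEquiv.apply_symm_apply, map_beta_Pt hd hζ, eval_W hd hζ]

lemma ff_homog (hd : 2 ≤ d) (i : Fin (m + 3)) : (ff m d i).IsHomogeneous d := by
  induction i using Fin.cases with
  | zero =>
    rw [ff, Fin.cases_zero]
    exact gP_homog (by omega)
  | succ i =>
    rw [ff, Fin.cases_succ]
    simpa using (isHomogeneous_X ℂ i).pow d

lemma natDegree_finSuccEquiv_lt {e : ℕ} (Q : MvPolynomial (Fin (m + 3)) ℂ)
    (hQ : Q.IsHomogeneous e) : (finSuccEquiv ℂ (m + 2) Q).natDegree ≤ e := by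
  rw [Polynomial.natDegree_le_iff_coeff_eq_zero]
  intro j hj
  apply MvPolynomial.ext
  intro u
  rw [finSuccEquiv_coeff_coeff]
  rw [coeff_zero]
  by_contra hc
  have h2 := isHomogeneous_iff'.1 hQ _ hc
  rw [Fin.sum_univ_succ] at h2
  rw [Finsupp.cons_zero] at h2
  omega

end Stmt3Aux

end Stmt3Aux

open Stmt3Aux in
theorem stmt_3 (n d : ℕ) (hn : 2 ≤ n) (hd : 2 ≤ d) :
    ∃ f : Fin (n + 1) → MvPolynomial (Fin n) ℂ,
      (∀ i, (f i).IsHomogeneous d) ∧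
      ∃ P : MvPolynomial (Fin (n + 1)) ℂ,
        Irreducible P ∧ P.IsHomogeneous (d ^ (n - 1)) ∧
        RingHom.ker (MvPolynomial.aeval f : MvPolynomial (Fin (n + 1)) ℂ →ₐ[ℂ] MvPolynomial (Fin n) ℂ)
          = Ideal.span {P} ∧
        (∀ (e : ℕ) (Q : MvPolynomial (Fin (n + 1)) ℂ),
          Q.IsHomogeneous e → e < d ^ (n - 1) → Q ≠ 0 → MvPolynomial.aeval f Q ≠ 0) := by
  obtain ⟨m, rfl⟩ : ∃ m, n = m + 2 := ⟨n - 2, by omega⟩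
  haveI : NeZero d := ⟨by omega⟩
  set ζ : ℂ := Complex.exp (2 * Real.pi * Complex.I / d) with hζdef
  have hζ : IsPrimitiveRoot ζ d := Complex.isPrimitiveRoot_exp d (by omega)
  have hDD : d ^ (m + 2 - 1) = DD m d := by
    have h21 : m + 2 - 1 = m + 1 := by omega
    rw [h21, DD]
  refine ⟨ff m d, fun i => ff_homog hd i, PP m d ζ, ?_, ?_, ?_, ?_⟩
  · exact (MulEquiv.irreducible_iff ((finSuccEquiv ℂ (m + 2)).symm)).2 (irreducible_Pt hd hζ)
  · rw [hDD]
    exact homog_PP hd hζ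
  · apply Ideal.ext
    intro Q
    rw [RingHom.mem_ker, Ideal.mem_span_singleton]
    constructor
    · intro hQ
      rw [aeval_ff_eq] at hQ
      set Q' := finSuccEquiv ℂ (m + 2) Q with hQ'
      have hdiv := Polynomial.modByMonic_add_div Q' (Pt m d ζ)
      set R' := Q' %ₘ Pt m d ζ with hR'
      set S' := Q' /ₘ Pt m d ζ with hS'
      have hR0 : R' = 0 := by
        apply claimA hd hζ
        · rcases eq_or_ne R' 0 with h | h
          · rw [h]
            have h2 := DD_ge_two (m := m) hd
            simp only [Polynomial.natDegree_zero]
            omega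
          · have hdlt := Polynomial.degree_modByMonic_lt Q' (monic_Pt hd hζ (m := m))
            have h2 := Polynomial.natDegree_lt_natDegree h hdlt
            rwa [natDegree_Pt hd hζ] at h2
        · have hexp : R'.map (beta m d).toRingHom
              = Q'.map (beta m d).toRingHom
                - (Pt m d ζ).map (beta m d).toRingHom * S'.map (beta m d).toRingHom := by
            conv_rhs => rw [← hdiv]
            rw [Polynomial.map_add, Polynomial.map_mul]
            ring
          rw [hexp, Polynomial.eval_sub, Polynomial.eval_mul, hQ, map_beta_Pt hd hζ,
            eval_W hd hζ, zero_mul, sub_zero]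
      refine ⟨(finSuccEquiv ℂ (m + 2)).symm S', ?_⟩
      have hQfact : Q' = Pt m d ζ * S' := by rw [← hdiv, hR0, zero_add]
      calc Q = (finSuccEquiv ℂ (m + 2)).symm Q' := by rw [hQ', AlgEquiv.symm_apply_apply]
        _ = (finSuccEquiv ℂ (m + 2)).symm (Pt m d ζ * S') := by rw [hQfact]
        _ = PP m d ζ * (finSuccEquiv ℂ (m + 2)).symm S' := by rw [map_mul, PP]
    · rintro ⟨c, rfl⟩
      rw [map_mul, aeval_ff_PP hd hζ, zero_mul]
  · intro e Q hQhom he hQ0 h0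
    rw [aeval_ff_eq] at h0
    have hQ' : finSuccEquiv ℂ (m + 2) Q = 0 := by
      apply claimA hd hζ _ _ h0
      have h1 := natDegree_finSuccEquiv_lt Q hQhom
      rw [hDD] at he
      omega
    apply hQ0
    have := congrArg (finSuccEquiv ℂ (m + 2)).symm hQ'
    rwa [AlgEquiv.symm_apply_apply, map_zero] at this
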